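/- Let L be a reflective subfibration on E and X an object of E such that the slice category Over X is cartesian closed. Then L_X preserves binary products: for all objects p, q of Over X, the canonical morphism L_X(p ⨯ q) ⟶ L_X(p) ⨯ L_X(q) is an isomorphism; consequently, if α and β are L_X-equivalences, then so is α ⨯ β. -/

import Mathlib

open CategoryTheory CategoryTheory.Limits

universe v u

/-- A morphism `l` is uniquely left orthogonal to a morphism `r`. -/
def UniqueLift {C : Type*} [Category C] {A B X Y : C} (l : A ⟶ B) (r : X ⟶ Y) : Prop :=
  ∀ (u : A ⟶ X) (v : B ⟶ Y), u ≫ r = l ≫ v → ∃! d : B ⟶ X, l ≫ d = u ∧ d ≫ r = v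

variable (E : Type u) [Category.{v} E] [HasPullbacks E]

/-- A reflective subfibration on a category `E` with pullbacks: a pullback-stable
assignment of a reflective (full) subcategory `D X ⊆ Over X` for every `X : E`,
with reflector `Lf X` (the composite of the localization onto `D X` and the
inclusion) and unit `η X`, such that pullback functors preserve the subcategories
and the canonical comparison map `L_X (f* p) ⟶ f* (L_Y p)` is an isomorphism;
the latter is expressed by requiring that the pullback of a unit map is an
`L_X`-equivalence, which is equivalent to invertibility of the comparison map. -/
structure ReflectiveSubfibration where
  /-- membership in the reflective subcategory `D X ⊆ Over X` -/
  loc : ∀ {X : E}, Over X → Prop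
  /-- the localization functor `L_X : Over X ⥤ Over X` -/
  Lf : ∀ X : E, Over X ⥤ Over X
  /-- the unit of the localization -/
  η : ∀ X : E, 𝟭 (Over X) ⟶ Lf X
  loc_obj : ∀ (X : E) (p : Over X), loc ((Lf X).obj p)
  reflect : ∀ (X : E) (p d : Over X), loc d → ∀ g : p ⟶ d,
      ∃! h : (Lf X).obj p ⟶ d, (η X).app p ≫ h = g
  loc_pullback : ∀ {X Y : E} (f : X ⟶ Y) (p : Over Y),
      loc p → loc ((Over.pullback f).obj p)
  comparison_isIso : ∀ {X Y : E} (f : X ⟶ Y) (p : Over Y),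
      IsIso ((Lf X).map ((Over.pullback f).map ((η Y).app p)))

variable {E}

namespace ReflectiveSubfibration

variable (rsf : ReflectiveSubfibration E)

/-- A morphism `p : A ⟶ X` of `E` is `L`-local if it lies in `D X` as an object of `Over X`. -/
def LocalMap {A X : E} (p : A ⟶ X) : Prop := rsf.loc (Over.mk p)

/-- A morphism of `Over X` is an `L_X`-equivalence if `L_X` inverts it. -/
def Lequiv {X : E} {p q : Over X} (α : p ⟶ q) : Prop := IsIso ((rsf.Lf X).map α)

/-- A morphism `f : A ⟶ X` is `L`-connected if `L_X f` is a terminal object of `Over X`,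
i.e. its structure morphism to `X` is an isomorphism. -/
def Connected {A X : E} (f : A ⟶ X) : Prop := IsIso ((rsf.Lf X).obj (Over.mk f)).hom

/-- A morphism is `L`-separated if its diagonal is `L`-local. -/
def Separated {A X : E} (p : A ⟶ X) : Prop := rsf.LocalMap (pullback.diagonal p)

end ReflectiveSubfibration

namespace ReflectiveSubfibration

variable (rsf : ReflectiveSubfibration E)

/-- Naturality of the unit. -/
lemma unit_nat {X : E} {a b : Over X} (α : a ⟶ b) :
    α ≫ (rsf.η X).app b = (rsf.η X).app a ≫ (rsf.Lf X).map α := by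
  simpa using (rsf.η X).naturality α

/-- Precomposition with an `L`-equivalence into a local object is injective. -/
lemma precomp_cancel {X : E} {a b d : Over X} (α : a ⟶ b) (hα : rsf.Lequiv α)
    (hd : rsf.loc d) {g g' : b ⟶ d} (h : α ≫ g = α ≫ g') : g = g' := by
  haveI : IsIso ((rsf.Lf X).map α) := hα
  obtain ⟨k, hk, -⟩ := rsf.reflect X b d hd g
  obtain ⟨k', hk', -⟩ := rsf.reflect X b d hd g'
  obtain ⟨m, -, hm⟩ := rsf.reflect X a d hd (α ≫ g)
  have e1 : (rsf.η X).app a ≫ ((rsf.Lf X).map α ≫ k) = α ≫ g := by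
    rw [← Category.assoc, ← rsf.unit_nat α, Category.assoc, hk]
  have e2 : (rsf.η X).app a ≫ ((rsf.Lf X).map α ≫ k') = α ≫ g := by
    rw [← Category.assoc, ← rsf.unit_nat α, Category.assoc, hk', h]
  have : (rsf.Lf X).map α ≫ k = (rsf.Lf X).map α ≫ k' := by
    rw [hm _ e1, hm _ e2]
  have : k = k' := by
    exact (cancel_epi ((rsf.Lf X).map α)).mp this
  rw [← hk, ← hk', this]

/-- Precomposition with an `L`-equivalence into a local object is bijective. -/
lemma precomp_existsUnique {X : E} {a b d : Over X} (α : a ⟶ b) (hα : rsf.Lequiv α)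
    (hd : rsf.loc d) (u : a ⟶ d) : ∃! g : b ⟶ d, α ≫ g = u := by
  haveI : IsIso ((rsf.Lf X).map α) := hα
  obtain ⟨h, hh, -⟩ := rsf.reflect X a d hd u
  have hfac : α ≫ ((rsf.η X).app b ≫ inv ((rsf.Lf X).map α) ≫ h) = u := by
    rw [← Category.assoc, rsf.unit_nat α, Category.assoc]
    simp [hh]
  refine ⟨(rsf.η X).app b ≫ inv ((rsf.Lf X).map α) ≫ h, hfac, ?_⟩
  · intro g' hg'
    apply rsf.precomp_cancel α hα hd
    rw [hg', hfac]

/-- If precomposition with `α` into every local object is bijective then `α` is an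
`L`-equivalence. -/
lemma lequiv_of_precomp {X : E} {a b : Over X} (α : a ⟶ b)
    (H : ∀ (d : Over X), rsf.loc d → ∀ u : a ⟶ d, ∃! g : b ⟶ d, α ≫ g = u) :
    rsf.Lequiv α := by
  obtain ⟨s, hs, hsu⟩ := H ((rsf.Lf X).obj a) (rsf.loc_obj X a) ((rsf.η X).app a)
  obtain ⟨t, ht, -⟩ := rsf.reflect X b ((rsf.Lf X).obj a) (rsf.loc_obj X a) s
  have h1 : (rsf.Lf X).map α ≫ t = 𝟙 _ := by
    obtain ⟨m, -, hm⟩ := rsf.reflect X a ((rsf.Lf X).obj a) (rsf.loc_obj X a)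
      ((rsf.η X).app a)
    have e1 : (rsf.η X).app a ≫ ((rsf.Lf X).map α ≫ t) = (rsf.η X).app a := by
      rw [← Category.assoc, ← rsf.unit_nat α, Category.assoc, ht, hs]
    exact (hm _ e1).trans (hm (𝟙 _) (Category.comp_id _)).symm
  have hsl : s ≫ (rsf.Lf X).map α = (rsf.η X).app b := by
    have e1 : α ≫ (s ≫ (rsf.Lf X).map α) = α ≫ (rsf.η X).app b := by
      rw [← Category.assoc, hs, rsf.unit_nat α]
    obtain ⟨m, -, hm⟩ := H ((rsf.Lf X).obj b) (rsf.loc_obj X b) (α ≫ (rsf.η X).app b)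
    exact (hm _ e1).trans (hm ((rsf.η X).app b) rfl).symm
  have h2 : t ≫ (rsf.Lf X).map α = 𝟙 _ := by
    obtain ⟨m, -, hm⟩ := rsf.reflect X b ((rsf.Lf X).obj b) (rsf.loc_obj X b)
      ((rsf.η X).app b)
    have e1 : (rsf.η X).app b ≫ (t ≫ (rsf.Lf X).map α) = (rsf.η X).app b := by
      rw [← Category.assoc, ht, hsl]
    exact (hm _ e1).trans (hm (𝟙 _) (Category.comp_id _)).symm
  exact ⟨t, h1, h2⟩

/-- The unit is an isomorphism at local objects. -/
lemma isIso_unit_of_loc {X : E} {d : Over X} (hd : rsf.loc d) :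
    IsIso ((rsf.η X).app d) := by
  obtain ⟨h, hh, -⟩ := rsf.reflect X d d hd (𝟙 d)
  obtain ⟨m, -, hm⟩ := rsf.reflect X d ((rsf.Lf X).obj d) (rsf.loc_obj X d)
    ((rsf.η X).app d)
  refine ⟨h, hh, ?_⟩
  have e1 : (rsf.η X).app d ≫ (h ≫ (rsf.η X).app d) = (rsf.η X).app d := by
    rw [← Category.assoc, hh]
    simp
  exact (hm _ e1).trans (hm (𝟙 _) (Category.comp_id _)).symm

/-- The unit is an `L`-equivalence. -/
lemma unit_lequiv {X : E} (p : Over X) : rsf.Lequiv ((rsf.η X).app p) := by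
  have h : (rsf.Lf X).map ((rsf.η X).app p) = (rsf.η X).app ((rsf.Lf X).obj p) := by
    obtain ⟨m, -, hm⟩ := rsf.reflect X p ((rsf.Lf X).obj ((rsf.Lf X).obj p))
      (rsf.loc_obj X _) ((rsf.η X).app p ≫ (rsf.η X).app ((rsf.Lf X).obj p))
    exact (hm _ (rsf.unit_nat ((rsf.η X).app p)).symm).trans (hm _ rfl).symm
  rw [Lequiv, h]
  exact rsf.isIso_unit_of_loc (rsf.loc_obj X p)

section Products

variable {X : E}

/-- Comparison from the dependent-sum description of the product with `q` to the
categorical binary product. -/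
noncomputable def jmap (q a : Over X) [HasBinaryProduct a q] :
    (Over.map q.hom).obj ((Over.pullback q.hom).obj a) ⟶ ((a ⨯ q : Over X)) :=
  prod.lift (Over.homMk (pullback.fst a.hom q.hom) (by simpa using pullback.condition))
    (Over.homMk (pullback.snd a.hom q.hom) rfl)

lemma jmap_isIso (q a : Over X) [HasBinaryProduct a q] : IsIso (jmap q a) := by
  refine ⟨Over.homMk (pullback.lift (prod.fst : a ⨯ q ⟶ a).left
      (prod.snd : a ⨯ q ⟶ q).left (by rw [Over.w, Over.w])) (by exact (pullback.lift_snd_assoc _ _ _ _).trans (Over.w _)), ?_, ?_⟩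
  · ext
    dsimp [jmap]
    apply pullback.hom_ext
    · simp [← Over.comp_left_assoc, ← Over.comp_left]
      rw [pullback.lift_fst, ← Over.comp_left, prod.lift_fst]
      rfl
    · simp [← Over.comp_left_assoc, ← Over.comp_left]
      rw [pullback.lift_snd, ← Over.comp_left, prod.lift_snd]
      rfl
  · apply Limits.prod.hom_ext
    · ext; simp [jmap]
      rw [← Over.comp_left, prod.lift_fst, Over.comp_left]
      exact pullback.lift_fst _ _ _
    · ext; simp [jmap]
      rw [← Over.comp_left, prod.lift_snd, Over.comp_left]
      exact pullback.lift_snd _ _ _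

lemma jmap_natural (q : Over X) {a b : Over X} [HasBinaryProduct a q] [HasBinaryProduct b q]
    (α : a ⟶ b) :
    (Over.map q.hom).map ((Over.pullback q.hom).map α) ≫ jmap q b =
      jmap q a ≫ prod.map α (𝟙 q) := by
  apply Limits.prod.hom_ext
  · rw [Category.assoc, Category.assoc, prod.map_fst]
    ext
    simp [jmap]
    rw [← Over.comp_left, prod.lift_fst, ← Over.comp_left_assoc, prod.lift_fst]
    exact pullback.lift_fst _ _ _
  · rw [Category.assoc, Category.assoc, prod.map_snd]
    ext
    simp [jmap]
    rw [← Over.comp_left, prod.lift_snd, ← Over.comp_left, prod.lift_snd]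
    exact pullback.lift_snd _ _ _

end Products

/-- `- ⨯ q` applied to a unit map is an `L`-equivalence. -/
lemma lequiv_prodMap_unit {X : E} [HasBinaryProducts (Over X)] (p q : Over X) :
    rsf.Lequiv (prod.map ((rsf.η X).app p) (𝟙 q)) := by
  haveI h1 : HasBinaryProduct p q := inferInstance
  haveI h1' : HasBinaryProduct ((𝟭 (Over X)).obj p) q := h1
  haveI h2 : HasBinaryProduct ((rsf.Lf X).obj p) q := inferInstance
  apply rsf.lequiv_of_precomp
  intro d hd u
  set A := Over.mapPullbackAdj (C := E) q.hom with hA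
  haveI hjp : IsIso (jmap q p) := jmap_isIso q p
  haveI hjLp : IsIso (jmap q ((rsf.Lf X).obj p)) := jmap_isIso q _
  have hloc := rsf.loc_pullback q.hom d hd
  have hle : rsf.Lequiv ((Over.pullback q.hom).map ((rsf.η X).app p)) :=
    rsf.comparison_isIso q.hom p
  have e : ∀ g : (rsf.Lf X).obj p ⨯ q ⟶ d,
      (A.homEquiv _ _) (jmap q p ≫ prod.map ((rsf.η X).app p) (𝟙 q) ≫ g) =
        (Over.pullback q.hom).map ((rsf.η X).app p) ≫
          (A.homEquiv _ _) (jmap q ((rsf.Lf X).obj p) ≫ g) := by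
    intro g
    rw [← Category.assoc, ← jmap_natural q (a := p) ((rsf.η X).app p), Category.assoc,
      Adjunction.homEquiv_naturality_left]
  obtain ⟨g', hg', hgu⟩ := rsf.precomp_existsUnique _ hle hloc
    ((A.homEquiv _ _) (jmap q p ≫ u))
  set G : (rsf.Lf X).obj p ⨯ q ⟶ d :=
    inv (jmap q ((rsf.Lf X).obj p)) ≫ (A.homEquiv _ _).symm g' with hG
  have hjG : jmap q ((rsf.Lf X).obj p) ≫ G = (A.homEquiv _ _).symm g' := by
    rw [hG, IsIso.hom_inv_id_assoc]
  refine ⟨G, ?_, ?_⟩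
  · have e2 := e G
    rw [hjG, Equiv.apply_symm_apply, hg'] at e2
    have e3 : jmap q p ≫ prod.map ((rsf.η X).app p) (𝟙 q) ≫ G = jmap q p ≫ u :=
      (A.homEquiv _ _).injective e2
    exact (cancel_epi (jmap q p)).mp e3
  · intro g₁ hgl
    have e1 := e g₁
    rw [hgl] at e1
    have e4 : (A.homEquiv _ _) (jmap q ((rsf.Lf X).obj p) ≫ g₁) = g' :=
      hgu _ e1.symm
    have e5 : jmap q ((rsf.Lf X).obj p) ≫ g₁ = (A.homEquiv _ _).symm g' := by
      rw [← e4, Equiv.symm_apply_apply]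
    rw [hG, ← e5, IsIso.inv_hom_id_assoc]

/-- `q ⨯ -` applied to a unit map is an `L`-equivalence. -/
lemma lequiv_prodMap_unit' {X : E} [HasBinaryProducts (Over X)] (p q : Over X) :
    rsf.Lequiv (prod.map (𝟙 q) ((rsf.η X).app p)) := by
  have e : prod.map (𝟙 q) ((rsf.η X).app p) =
      (prod.braiding q p).hom ≫ prod.map ((rsf.η X).app p) (𝟙 q) ≫
        (prod.braiding ((rsf.Lf X).obj p) q).hom := by
    apply Limits.prod.hom_ext <;> simp
    · rw [prod.lift_fst, prod.lift_snd]
    · rw [prod.lift_snd, prod.lift_fst_assoc]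
  haveI h := rsf.lequiv_prodMap_unit p q
  rw [Lequiv, e, Functor.map_comp, Functor.map_comp]
  haveI : IsIso ((rsf.Lf X).map (prod.map ((rsf.η X).app p) (𝟙 q))) := h
  infer_instance

end ReflectiveSubfibration

set_option maxHeartbeats 1600000 in
/-- If `Over X` is cartesian closed, `L_X` preserves binary products: the canonical map
`L_X (p ⨯ q) ⟶ L_X p ⨯ L_X q` is an isomorphism; consequently a binary product of
`L_X`-equivalences is an `L_X`-equivalence. -/
theorem lf_preserves_prod (rsf : ReflectiveSubfibration E) (X : E)
    [CartesianMonoidalCategory (Over X)] [MonoidalClosed (Over X)] :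
    (∀ p q : Over X, IsIso (Limits.prodComparison (rsf.Lf X) p q)) ∧
    (∀ {p p' q q' : Over X} (α : p ⟶ p') (β : q ⟶ q'),
      rsf.Lequiv α → rsf.Lequiv β → rsf.Lequiv (Limits.prod.map α β)) := by
  have key : ∀ p q : Over X, IsIso (Limits.prodComparison (rsf.Lf X) p q) := by
    intro p q
    set L := rsf.Lf X with hL
    set c := Limits.prodComparison L p q with hc
    have h1 : (rsf.η X).app (p ⨯ q) ≫ c =
        prod.map ((rsf.η X).app p) ((rsf.η X).app q) := by
      apply Limits.prod.hom_ext
      · rw [Category.assoc, hc, prodComparison_fst, prod.map_fst]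
        simpa using ((rsf.η X).naturality (prod.fst : p ⨯ q ⟶ p)).symm
      · rw [Category.assoc, hc, prodComparison_snd, prod.map_snd]
        simpa using ((rsf.η X).naturality (prod.snd : p ⨯ q ⟶ q)).symm
    have h2 : rsf.Lequiv (prod.map ((rsf.η X).app p) ((rsf.η X).app q)) := by
      have e : prod.map ((rsf.η X).app p) ((rsf.η X).app q) =
          prod.map ((rsf.η X).app p) (𝟙 q) ≫ prod.map (𝟙 (L.obj p)) ((rsf.η X).app q) := by
        rw [prod.map_map, Category.comp_id, Category.id_comp]
      haveI hA := rsf.lequiv_prodMap_unit p q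
      haveI hB := rsf.lequiv_prodMap_unit' q (L.obj p)
      rw [ReflectiveSubfibration.Lequiv, e, Functor.map_comp]
      haveI : IsIso (L.map (prod.map ((rsf.η X).app p) (𝟙 q))) := hA
      haveI : IsIso (L.map (prod.map (𝟙 (L.obj p)) ((rsf.η X).app q))) := hB
      infer_instance
    -- L.map c is iso
    haveI hη : IsIso (L.map ((rsf.η X).app (p ⨯ q))) := rsf.unit_lequiv (p ⨯ q)
    haveI hLc : IsIso (L.map c) := by
      have e : L.map ((rsf.η X).app (p ⨯ q)) ≫ L.map c =
          L.map (prod.map ((rsf.η X).app p) ((rsf.η X).app q)) := by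
        rw [← Functor.map_comp, h1]
      haveI : IsIso (L.map (prod.map ((rsf.η X).app p) ((rsf.η X).app q))) := h2
      have : L.map c = inv (L.map ((rsf.η X).app (p ⨯ q))) ≫
          L.map (prod.map ((rsf.η X).app p) ((rsf.η X).app q)) := by
        rw [← e, IsIso.inv_hom_id_assoc]
      rw [this]
      infer_instance
    -- the unit is iso at L p ⨯ L q
    haveI hB : IsIso ((rsf.η X).app (L.obj p ⨯ L.obj q)) := by
      obtain ⟨f1, hf1, -⟩ := rsf.reflect X (L.obj p ⨯ L.obj q) (L.obj p)
        (rsf.loc_obj X p) prod.fst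
      obtain ⟨f2, hf2, -⟩ := rsf.reflect X (L.obj p ⨯ L.obj q) (L.obj q)
        (rsf.loc_obj X q) prod.snd
      refine ⟨prod.lift f1 f2, ?_, ?_⟩
      · apply Limits.prod.hom_ext <;> simp [hf1, hf2]
      · obtain ⟨m, -, hm⟩ := rsf.reflect X (L.obj p ⨯ L.obj q)
          (L.obj (L.obj p ⨯ L.obj q)) (rsf.loc_obj X _) ((rsf.η X).app _)
        have e1 : (rsf.η X).app (L.obj p ⨯ L.obj q) ≫
            (prod.lift f1 f2 ≫ (rsf.η X).app (L.obj p ⨯ L.obj q)) =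
            (rsf.η X).app (L.obj p ⨯ L.obj q) := by
          rw [← Category.assoc]
          have : (rsf.η X).app (L.obj p ⨯ L.obj q) ≫ prod.lift f1 f2 = 𝟙 _ := by
            apply Limits.prod.hom_ext <;> simp [hf1, hf2]
          rw [this, Category.id_comp]
        exact (hm _ e1).trans (hm (𝟙 _) (Category.comp_id _)).symm
    haveI hA : IsIso ((rsf.η X).app (L.obj (p ⨯ q))) :=
      rsf.isIso_unit_of_loc (rsf.loc_obj X (p ⨯ q))
    have nat : c ≫ (rsf.η X).app (L.obj p ⨯ L.obj q) =
        (rsf.η X).app (L.obj (p ⨯ q)) ≫ L.map c := by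
      simpa using (rsf.η X).naturality c
    have : c = ((rsf.η X).app (L.obj (p ⨯ q)) ≫ L.map c) ≫
        inv ((rsf.η X).app (L.obj p ⨯ L.obj q)) := by
      rw [← nat, Category.assoc, IsIso.hom_inv_id, Category.comp_id]
    rw [this]
    infer_instance
  refine ⟨key, ?_⟩
  intro p p' q q' α β hα hβ
  haveI := key p q
  haveI := key p' q'
  haveI : IsIso ((rsf.Lf X).map α) := hα
  haveI : IsIso ((rsf.Lf X).map β) := hβ
  have h := prodComparison_natural (rsf.Lf X) α β
  rw [ReflectiveSubfibration.Lequiv]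
  have e : (rsf.Lf X).map (prod.map α β) =
      Limits.prodComparison (rsf.Lf X) p q ≫
        prod.map ((rsf.Lf X).map α) ((rsf.Lf X).map β) ≫
        inv (Limits.prodComparison (rsf.Lf X) p' q') := by
    rw [← Category.assoc, ← h, Category.assoc, IsIso.hom_inv_id, Category.comp_id]
  rw [e]
  infer_instance
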